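/- Let D be an idempotent pv-monoid whose valuation function val is symmetric and ⊕-preservative. Then for every w_pvm-PCL formula ζ: ∼(∗ζ) ≡ ∗(∼ζ), i.e., ⊕_{γ'⊆γ} ‖∗ζ‖(γ') = ‖∗(∼ζ)‖(γ) for every configuration γ. -/

import Mathlib

/-- Syntax of propositional interaction logic (PIL) over a set of ports `P`. -/
inductive PIL (P : Type) where
  | tt : PIL P
  | port : P → PIL P
  | neg : PIL P → PIL P
  | disj : PIL P → PIL P → PIL P

/-- Satisfaction of a PIL formula by an interaction (a finite set of ports). -/
def PILsat {P : Type} (α : Finset P) : PIL P → Prop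
  | .tt => True
  | .port p => p ∈ α
  | .neg φ => ¬ PILsat α φ
  | .disj φ ψ => PILsat α φ ∨ PILsat α ψ

/-- Syntax of propositional configuration logic (PCL) over ports `P`. -/
inductive PCL (P : Type) where
  | tt : PCL P
  | pil : PIL P → PCL P
  | neg : PCL P → PCL P
  | union : PCL P → PCL P → PCL P
  | coal : PCL P → PCL P → PCL P

/-- Satisfaction of a PCL formula by a configuration (a finite set of interactions). -/
def PCLsat {P : Type} [DecidableEq P] : Finset (Finset P) → PCL P → Prop
  | _, .tt => True
  | γ, .pil φ => ∀ a ∈ γ, PILsat a φ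
  | γ, .neg f => ¬ PCLsat γ f
  | γ, .union f g => PCLsat γ f ∨ PCLsat γ g
  | γ, .coal f g => ∃ γ₁ γ₂ : Finset (Finset P),
      γ₁.Nonempty ∧ γ₂.Nonempty ∧ γ₁ ∪ γ₂ = γ ∧ PCLsat γ₁ f ∧ PCLsat γ₂ g

/-- Syntax of weighted PCL over ports `P` and a pv-monoid with carrier `D`. -/
inductive WPCL (P D : Type) where
  | const : D → WPCL P D
  | pcl : PCL P → WPCL P D
  | oplus : WPCL P D → WPCL P D → WPCL P D
  | otimes : WPCL P D → WPCL P D → WPCL P D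
  | coal : WPCL P D → WPCL P D → WPCL P D
  | star : WPCL P D → WPCL P D

open scoped Classical in
/-- Semantics of weighted PCL formulas.  The pv-monoid is given by an additive
commutative monoid `D` (the `⊕` operation and `0`), a multiplication `ot` (`⊗`),
a unit `one` and a symmetric valuation function `val` on nonempty multisets. -/
noncomputable def sem {P D : Type} [DecidableEq P] [AddCommMonoid D]
    (ot : D → D → D) (one : D) (val : Multiset D → D) :
    WPCL P D → Finset (Finset P) → D
  | .const d, _ => d
  | .pcl f, γ => if PCLsat γ f then one else 0
  | .oplus ζ₁ ζ₂, γ => sem ot one val ζ₁ γ + sem ot one val ζ₂ γ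
  | .otimes ζ₁ ζ₂, γ => ot (sem ot one val ζ₁ γ) (sem ot one val ζ₂ γ)
  | .coal ζ₁ ζ₂, γ =>
      ∑ p ∈ (γ.powerset ×ˢ γ.powerset).filter
        (fun p => p.1.Nonempty ∧ p.2.Nonempty ∧ Disjoint p.1 p.2 ∧ p.1 ∪ p.2 = γ),
        ot (sem ot one val ζ₁ p.1) (sem ot one val ζ₂ p.2)
  | .star ζ, γ =>
      ∑ Q ∈ γ.powerset.powerset.filter
        (fun Q => Q.Nonempty ∧ (∀ x ∈ Q, x.Nonempty) ∧
          (∀ x ∈ Q, ∀ y ∈ Q, x ≠ y → Disjoint x y) ∧ Q.sup id = γ),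
        val (Q.val.map (fun x => sem ot one val ζ x))

/-- `γ` is a configuration: a nonempty set of (nonempty) interactions. -/
def Config {P : Type} (γ : Finset (Finset P)) : Prop :=
  γ.Nonempty ∧ ∀ a ∈ γ, a.Nonempty

/-- The axioms of an (idempotent) product valuation monoid, on top of the
additive commutative monoid structure `(D, +, 0)`. -/
structure IsPVM (D : Type) [AddCommMonoid D]
    (ot : D → D → D) (one : D) (val : Multiset D → D) : Prop where
  zero_ot : ∀ d, ot 0 d = 0
  ot_zero : ∀ d, ot d 0 = 0
  one_ot : ∀ d, ot one d = d
  ot_one : ∀ d, ot d one = d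
  val_singleton : ∀ d, val {d} = d
  val_zero : ∀ m : Multiset D, (0 : D) ∈ m → val m = 0
  val_one : ∀ n : ℕ, 1 ≤ n → val (Multiset.replicate n one) = one
  idem : ∀ d : D, d + d = d

/-- The wclosure `∼ζ := ζ ⊕ (ζ ⊎ 1)` of a weighted PCL formula. -/
def wclosure {P D : Type} (one : D) (ζ : WPCL P D) : WPCL P D :=
  ζ.oplus (ζ.coal (.const one))



def sel {α : Type*} : List (Multiset α) → Multiset (Multiset α)
  | [] => {0}
  | m :: L => m.bind (fun a => (sel L).map (a ::ₘ ·))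

lemma mem_sel {α : Type*} {L : List (Multiset α)} {s : Multiset α} :
    s ∈ sel L ↔ ∃ l : List α, s = ↑l ∧ List.Forall₂ (· ∈ ·) l L := by
  induction L generalizing s with
  | nil =>
    simp only [sel, Multiset.mem_singleton]
    constructor
    · rintro rfl; exact ⟨[], rfl, List.Forall₂.nil⟩
    · rintro ⟨l, rfl, h⟩; cases h; rfl
  | cons m L ih =>
    simp only [sel, Multiset.mem_bind, Multiset.mem_map]
    constructor
    · rintro ⟨a, ha, t, ht, rfl⟩
      obtain ⟨l, rfl, hl⟩ := ih.1 ht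
      exact ⟨a :: l, rfl, List.Forall₂.cons ha hl⟩
    · rintro ⟨l, rfl, h⟩
      cases h with
      | cons ha hl => exact ⟨_, ha, _, ih.2 ⟨_, rfl, hl⟩, rfl⟩

section
variable {D : Type} [AddCommMonoid D] (val : Multiset D → D)

lemma val_cons_sum (hvz : ∀ m : Multiset D, (0 : D) ∈ m → val m = 0)
    (hpres : ∀ (d₁ d₂ : D) (m : Multiset D),
      val ((d₁ + d₂) ::ₘ m) = val (d₁ ::ₘ m) + val (d₂ ::ₘ m))
    (m t : Multiset D) :
    val (m.sum ::ₘ t) = (m.map (fun d => val (d ::ₘ t))).sum := by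
  induction m using Multiset.induction with
  | empty => simp [hvz _ (Multiset.mem_cons_self 0 t)]
  | cons a m ih => rw [Multiset.sum_cons, hpres, ih]; simp

lemma valsum (hvz : ∀ m : Multiset D, (0 : D) ∈ m → val m = 0)
    (hpres : ∀ (d₁ d₂ : D) (m : Multiset D),
      val ((d₁ + d₂) ::ₘ m) = val (d₁ ::ₘ m) + val (d₂ ::ₘ m))
    {α : Type*} (f : α → D) :
    ∀ (L : List (Multiset α)) (t : Multiset D),
    val ((↑(L.map (fun m => (m.map f).sum)) : Multiset D) + t)
      = ((sel L).map (fun s => val (s.map f + t))).sum := by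
  intro L
  induction L with
  | nil => intro t; simp [sel]
  | cons m L ih =>
    intro t
    have h1 : (↑((m :: L).map (fun m => (m.map f).sum)) : Multiset D) + t
        = (m.map f).sum ::ₘ ((↑(L.map (fun m => (m.map f).sum)) : Multiset D) + t) := by
      rw [List.map_cons, ← Multiset.cons_coe, Multiset.cons_add]
    rw [h1, val_cons_sum val hvz hpres, Multiset.map_map]
    have h2 : ∀ a : α,
        val (f a ::ₘ ((↑(L.map (fun m => (m.map f).sum)) : Multiset D) + t))
        = ((sel L).map (fun s => val (s.map f + (f a ::ₘ t)))).sum := by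
      intro a
      rw [← ih (f a ::ₘ t), Multiset.add_cons]
    have h3 : (m.map fun a =>
        val (f a ::ₘ ((↑(L.map fun m => (m.map f).sum) : Multiset D) + t))).sum
        = (m.map fun a => ((sel L).map (fun s => val (s.map f + (f a ::ₘ t)))).sum).sum := by
      congr 1; exact Multiset.map_congr rfl fun a _ => h2 a
    rw [Function.comp_def, h3]
    show _ = ((sel (m :: L)).map (fun s => val (s.map f + t))).sum
    rw [show sel (m :: L) = m.bind (fun a => (sel L).map (a ::ₘ ·)) from rfl]
    rw [Multiset.map_bind, Multiset.sum_bind]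
    congr 1
    apply Multiset.map_congr rfl
    intro a _
    rw [Multiset.map_map]
    congr 1
    apply Multiset.map_congr rfl
    intro s _
    simp only [Function.comp_apply, Multiset.map_cons, Multiset.cons_add, Multiset.add_cons]

end

section SemClosure
variable {P D : Type} [DecidableEq P] [AddCommMonoid D]
  (ot : D → D → D) (one : D) (val : Multiset D → D)

open scoped Classical in
lemma semclosure (hpvm : IsPVM D ot one val) (ζ : WPCL P D)
    (δ : Finset (Finset P)) (hδ : δ.Nonempty) :
    sem ot one val (wclosure one ζ) δ
      = ∑ δ' ∈ δ.powerset.filter Finset.Nonempty, sem ot one val ζ δ' := by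
  classical
  have hunfold : sem ot one val (wclosure one ζ) δ
      = sem ot one val ζ δ +
        ∑ p ∈ (δ.powerset ×ˢ δ.powerset).filter
          (fun p => p.1.Nonempty ∧ p.2.Nonempty ∧ Disjoint p.1 p.2 ∧ p.1 ∪ p.2 = δ),
          ot (sem ot one val ζ p.1) (sem ot one val (.const one) p.2) := by
    simp [wclosure, sem]
  have hone : ∀ p : Finset (Finset P) × Finset (Finset P),
      ot (sem ot one val ζ p.1) (sem ot one val (.const one) p.2)
        = sem ot one val ζ p.1 := by
    intro p; exact hpvm.ot_one _
  rw [hunfold]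
  have hmem : δ ∈ δ.powerset.filter Finset.Nonempty := by
    simp [Finset.mem_filter, Finset.mem_powerset, hδ]
  rw [← Finset.add_sum_erase _ _ hmem]
  congr 1
  refine Finset.sum_nbij' (fun p => p.1) (fun δ' => (δ', δ \ δ')) ?_ ?_ ?_ ?_ ?_
  · rintro ⟨p1, p2⟩ hp
    simp only [Finset.mem_filter, Finset.mem_product, Finset.mem_powerset] at hp
    obtain ⟨⟨hs1, hs2⟩, hn1, hn2, hdisj, huni⟩ := hp
    simp only [Finset.mem_erase, Finset.mem_filter, Finset.mem_powerset]
    refine ⟨?_, hs1, hn1⟩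
    rintro rfl
    obtain ⟨x, hx⟩ := hn2
    exact (Finset.disjoint_left.mp hdisj (hs2 hx) hx).elim
  · intro δ' hδ'
    simp only [Finset.mem_erase, Finset.mem_filter, Finset.mem_powerset] at hδ'
    obtain ⟨hne, hsub, hnon⟩ := hδ'
    simp only [Finset.mem_filter, Finset.mem_product, Finset.mem_powerset]
    refine ⟨⟨hsub, Finset.sdiff_subset⟩, hnon, ?_, Finset.disjoint_sdiff, Finset.union_sdiff_of_subset hsub⟩
    rw [Finset.sdiff_nonempty]
    intro h
    exact hne (le_antisymm hsub h)
  · rintro ⟨p1, p2⟩ hp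
    simp only [Finset.mem_filter, Finset.mem_product, Finset.mem_powerset] at hp
    obtain ⟨⟨hs1, hs2⟩, hn1, hn2, hdisj, huni⟩ := hp
    have : p2 = δ \ p1 := by
      ext x
      simp only [Finset.mem_sdiff]
      constructor
      · intro hx; exact ⟨huni ▸ Finset.mem_union_right _ hx,
          fun h => Finset.disjoint_left.mp hdisj h hx⟩
      · rintro ⟨hx, hnx⟩
        rcases Finset.mem_union.mp (huni ▸ hx) with h | h
        · exact absurd h hnx
        · exact h
    simp [this]
  · intro δ' _; rfl
  · intro p _; rw [hone]
end SemClosure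

section Helpers
variable {D : Type} [AddCommMonoid D]

lemma absorb_trans {a b c : D} (h1 : a + b = b) (h2 : b + c = c) : a + c = c := by
  rw [← h2, ← add_assoc, h1]

lemma mem_msum_absorb (idem : ∀ d : D, d + d = d) {s : Multiset D} {a : D}
    (h : a ∈ s) : a + s.sum = s.sum := by
  obtain ⟨t, rfl⟩ := Multiset.exists_cons_of_mem h
  rw [Multiset.sum_cons, ← add_assoc, idem]

lemma msum_absorb {s : Multiset D} {b : D} (h : ∀ a ∈ s, a + b = b) :
    s.sum + b = b := by
  induction s using Multiset.induction with
  | empty => simp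
  | cons a s ih =>
    rw [Multiset.sum_cons, add_assoc, ih fun x hx => h x (Multiset.mem_cons_of_mem hx),
      h a (Multiset.mem_cons_self a s)]

lemma mem_fsum_absorb (idem : ∀ d : D, d + d = d) {ι : Type*} {s : Finset ι} {x : ι}
    (h : x ∈ s) (f : ι → D) : f x + ∑ i ∈ s, f i = ∑ i ∈ s, f i :=
  mem_msum_absorb idem (Multiset.mem_map_of_mem f h)

lemma fsum_absorb {ι : Type*} {s : Finset ι} {b : D} {f : ι → D}
    (h : ∀ x ∈ s, f x + b = b) : (∑ i ∈ s, f i) + b = b :=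
  msum_absorb (by intro a ha; obtain ⟨x, hx, rfl⟩ := Multiset.mem_map.mp ha; exact h x hx)

lemma forall₂_mem_left {α β : Type*} {R : α → β → Prop} {l1 : List α} {l2 : List β}
    (h : List.Forall₂ R l1 l2) {a : α} (ha : a ∈ l1) : ∃ b ∈ l2, R a b := by
  induction l1 generalizing l2 with
  | nil => cases ha
  | cons x xs ih =>
    cases h with
    | cons hr ht =>
      rcases List.mem_cons.mp ha with rfl | ha'
      · exact ⟨_, List.mem_cons_self, hr⟩
      · obtain ⟨b, hb, hrb⟩ := ih ht ha'
        exact ⟨b, List.mem_cons_of_mem _ hb, hrb⟩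
end Helpers

section StarExpand
variable {P D : Type} [DecidableEq P] [AddCommMonoid D]
  (ot : D → D → D) (one : D) (val : Multiset D → D)

open scoped Classical in
lemma star_unfold (ζ : WPCL P D) (δ : Finset (Finset P)) :
    sem ot one val (.star ζ) δ
      = ∑ Q ∈ δ.powerset.powerset.filter
          (fun Q => Q.Nonempty ∧ (∀ x ∈ Q, x.Nonempty) ∧
            (∀ x ∈ Q, ∀ y ∈ Q, x ≠ y → Disjoint x y) ∧ Q.sup id = δ),
          val (Q.val.map (fun x => sem ot one val ζ x)) := by
  simp [sem]

lemma star_term_expand (hpvm : IsPVM D ot one val)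
    (hpres : ∀ (d₁ d₂ : D) (m : Multiset D),
      val ((d₁ + d₂) ::ₘ m) = val (d₁ ::ₘ m) + val (d₂ ::ₘ m))
    (ζ : WPCL P D) (Q : Finset (Finset (Finset P)))
    (hQ : ∀ x ∈ Q, x.Nonempty) (l : List (Finset (Finset P))) (hl : (↑l : Multiset _) = Q.val) :
    val (Q.val.map (fun x => sem ot one val (wclosure one ζ) x))
      = ((sel (l.map (fun x => (x.powerset.filter Finset.Nonempty).val))).map
          (fun s => val (s.map (fun x => sem ot one val ζ x)))).sum := by
  classical
  set f : Finset (Finset P) → D := fun x => sem ot one val ζ x with hf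
  have h1 : Q.val.map (fun x => sem ot one val (wclosure one ζ) x)
      = Q.val.map (fun x => (((x.powerset.filter Finset.Nonempty)).val.map f).sum) := by
    apply Multiset.map_congr rfl
    intro x hx
    rw [semclosure ot one val hpvm ζ x (hQ x hx)]
    rfl
  rw [h1, ← hl, Multiset.map_coe,
    show l.map (fun x => (((x.powerset.filter Finset.Nonempty)).val.map f).sum)
      = (l.map (fun x => (x.powerset.filter Finset.Nonempty).val)).map
          (fun m => (m.map f).sum) by rw [List.map_map]; rfl]
  have := valsum val hpvm.val_zero hpres f
    (l.map (fun x => (x.powerset.filter Finset.Nonempty).val)) 0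
  simpa using this
end StarExpand

section Main
variable {P D : Type} [DecidableEq P] [AddCommMonoid D]

open scoped Classical in
noncomputable def PartsF (δ : Finset (Finset P)) : Finset (Finset (Finset (Finset P))) :=
  δ.powerset.powerset.filter
    (fun Q => Q.Nonempty ∧ (∀ x ∈ Q, x.Nonempty) ∧
      (∀ x ∈ Q, ∀ y ∈ Q, x ≠ y → Disjoint x y) ∧ Q.sup id = δ)

lemma mem_PartsF {δ : Finset (Finset P)} {Q : Finset (Finset (Finset P))} :
    Q ∈ PartsF δ ↔ Q.Nonempty ∧ (∀ x ∈ Q, x.Nonempty) ∧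
      (∀ x ∈ Q, ∀ y ∈ Q, x ≠ y → Disjoint x y) ∧ Q.sup id = δ := by
  classical
  simp only [PartsF, Finset.mem_filter, Finset.mem_powerset, and_iff_right_iff_imp]
  intro h
  intro x hx
  rw [Finset.mem_powerset, ← h.2.2.2]
  exact Finset.le_sup (f := id) hx

open scoped Classical in
lemma star_unfold' (ot : D → D → D) (one : D) (val : Multiset D → D)
    (ζ : WPCL P D) (δ : Finset (Finset P)) :
    sem ot one val (.star ζ) δ
      = ∑ Q ∈ PartsF δ, val (Q.val.map (fun x => sem ot one val ζ x)) := by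
  simp [sem, PartsF]

lemma forall₂_pairwise_disjoint {β : Type*} [DecidableEq β] {l' l : List (Finset β)}
    (h : List.Forall₂ (fun a x => a ⊆ x ∧ a.Nonempty) l' l)
    (hp : l.Pairwise (fun x y => Disjoint x y)) :
    l'.Pairwise (fun a b => Disjoint a b) := by
  induction h with
  | nil => exact List.Pairwise.nil
  | cons hr ht ih =>
    cases hp with
    | cons hx hp' =>
      refine List.Pairwise.cons ?_ (ih hp')
      intro b hb
      obtain ⟨y, hy, hby⟩ := forall₂_mem_left ht hb
      exact Finset.disjoint_of_subset_left hr.1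
        (Finset.disjoint_of_subset_right hby.1 (hx y hy))

end Main
theorem stmt16 {P D : Type} [DecidableEq P] [AddCommMonoid D]
    (ot : D → D → D) (one : D) (val : Multiset D → D)
    (hpvm : IsPVM D ot one val)
    (hpres : ∀ (d₁ d₂ : D) (m : Multiset D),
      val ((d₁ + d₂) ::ₘ m) = val (d₁ ::ₘ m) + val (d₂ ::ₘ m))
    (ζ : WPCL P D) (γ : Finset (Finset P)) (hγ : Config γ) :
    sem ot one val (wclosure one (WPCL.star ζ)) γ
      = sem ot one val (WPCL.star (wclosure one ζ)) γ := by
  obtain ⟨hγne, hγint⟩ := hγ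
  rw [semclosure ot one val hpvm (WPCL.star ζ) γ hγne]
  simp only [star_unfold' ot one val]
  set f : Finset (Finset P) → D := fun x => sem ot one val ζ x with hf
  set g : Finset (Finset P) → D := fun x => sem ot one val (wclosure one ζ) x with hg
  set T : D := ∑ δ ∈ γ.powerset.filter Finset.Nonempty,
      ∑ Q ∈ PartsF δ, val (Q.val.map f) with hT
  set Rr : D := ∑ Q ∈ PartsF γ, val (Q.val.map g) with hR
  show T = Rr
  have h2 : Rr + T = T := by
    rw [hR]
    apply fsum_absorb
    intro Q hQmem
    obtain ⟨hQne, hQn, hQd, hQsup⟩ := mem_PartsF.mp hQmem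
    obtain ⟨l, hl0⟩ := Quotient.exists_rep Q.val
    have hl : (↑l : Multiset _) = Q.val := hl0
    rw [show val (Multiset.map g Q.val)
        = val (Q.val.map (fun x => sem ot one val (wclosure one ζ) x)) from rfl]
    rw [star_term_expand ot one val hpvm hpres ζ Q hQn l hl]
    apply msum_absorb
    intro a ha
    obtain ⟨s, hs, rfl⟩ := Multiset.mem_map.mp ha
    obtain ⟨l', rfl, hF⟩ := mem_sel.mp hs
    rw [List.forall₂_map_right_iff] at hF
    have hF' : List.Forall₂ (fun a x => a ⊆ x ∧ a.Nonempty) l' l := by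
      refine hF.imp ?_
      intro a x h
      have : a ∈ x.powerset.filter Finset.Nonempty := h
      simpa [Finset.mem_filter, Finset.mem_powerset] using this
    have hmem_l : ∀ x, x ∈ l ↔ x ∈ Q := by
      intro x
      rw [← Multiset.mem_coe, hl, ← Finset.mem_def]
    have hlnd : l.Nodup := by
      have := Q.nodup
      rw [← hl, Multiset.coe_nodup] at this
      exact this
    have hlpd : l.Pairwise (fun x y => Disjoint x y) :=
      hlnd.imp_of_mem (fun {x y} hx hy hne =>
        hQd x ((hmem_l x).mp hx) y ((hmem_l y).mp hy) hne)
    have hl'pd : l'.Pairwise (fun a b => Disjoint a b) :=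
      forall₂_pairwise_disjoint hF' hlpd
    have hne' : ∀ a ∈ l', a.Nonempty := by
      intro a ha'
      obtain ⟨y, _, h⟩ := forall₂_mem_left hF' ha'
      exact h.2
    have hl'nd : l'.Nodup := by
      refine hl'pd.imp_of_mem ?_
      intro a b ha' hb' hd
      rintro rfl
      have : a = ∅ := by simpa using disjoint_self.mp hd
      exact (hne' a ha').ne_empty this
    set Q' : Finset (Finset (Finset P)) := ⟨↑l', Multiset.coe_nodup.mpr hl'nd⟩ with hQ'
    have hQ'val : Q'.val = (↑l' : Multiset _) := rfl
    have hmem_l' : ∀ x, x ∈ l' ↔ x ∈ Q' := by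
      intro x; rw [← Multiset.mem_coe, ← hQ'val, ← Finset.mem_def]
    set γ' : Finset (Finset P) := Q'.sup id with hγ'
    have hl'ne : l' ≠ [] := by
      intro h
      subst h
      obtain rfl : l = [] := List.forall₂_nil_left_iff.mp hF'
      have : Q.val = 0 := by rw [← hl]; rfl
      exact hQne.ne_empty (Finset.val_eq_zero.mp this)
    have hQ'mem : Q' ∈ PartsF γ' := by
      rw [mem_PartsF]
      refine ⟨?_, ?_, ?_, rfl⟩
      · obtain ⟨a, l'', rfl⟩ := List.exists_cons_of_ne_nil hl'ne
        exact ⟨a, (hmem_l' a).mp (List.mem_cons_self)⟩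
      · intro x hx; exact hne' x ((hmem_l' x).mpr hx)
      · intro x hx y hy hne
        exact (haveI : Std.Symm (fun a b : Finset (Finset P) => Disjoint a b) := ⟨fun _ _ h => h.symm⟩; hl'pd.forall) ((hmem_l' x).mpr hx)
          ((hmem_l' y).mpr hy) hne
    have hγ'mem : γ' ∈ γ.powerset.filter Finset.Nonempty := by
      rw [Finset.mem_filter, Finset.mem_powerset]
      constructor
      · show Q'.sup id ≤ γ
        apply Finset.sup_le
        intro a haQ'
        obtain ⟨y, hy, hay⟩ := forall₂_mem_left hF' ((hmem_l' a).mpr haQ')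
        calc (id a : Finset (Finset P)) ⊆ y := hay.1
          _ ⊆ γ := by rw [← hQsup]; exact Finset.le_sup (f := id) ((hmem_l y).mp hy)
      · obtain ⟨a, l'', rfl⟩ := List.exists_cons_of_ne_nil hl'ne
        have haQ' : a ∈ Q' := (hmem_l' a).mp (List.mem_cons_self)
        obtain ⟨p, hp⟩ := hne' a (List.mem_cons_self)
        exact ⟨p, (Finset.le_sup (f := id) haQ') hp⟩
    have e1 : val (Multiset.map f ↑l') = val (Q'.val.map f) := rfl
    rw [e1]
    refine absorb_trans (mem_fsum_absorb hpvm.idem hQ'mem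
      (fun Q'' => val (Q''.val.map f))) ?_
    exact mem_fsum_absorb hpvm.idem hγ'mem
      (fun δ => ∑ Q'' ∈ PartsF δ, val (Q''.val.map f))

  have h1 : T + Rr = Rr := by
    rw [hT]
    apply fsum_absorb
    intro δ hδmem
    rw [Finset.mem_filter, Finset.mem_powerset] at hδmem
    obtain ⟨hδγ, hδne⟩ := hδmem
    apply fsum_absorb
    intro Q' hQ'mem
    obtain ⟨hQ'ne, hQ'n, hQ'd, hQ'sup⟩ := mem_PartsF.mp hQ'mem
    obtain ⟨x₀, hx₀⟩ := hQ'ne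
    have hx₀ne : x₀.Nonempty := hQ'n x₀ hx₀
    have hx₀δ : x₀ ⊆ δ := by rw [← hQ'sup]; exact Finset.le_sup (f := id) hx₀
    set r : Finset (Finset P) := γ \ δ with hr
    set Q : Finset (Finset (Finset P)) := insert (x₀ ∪ r) (Q'.erase x₀) with hQdef
    have hsubδ : ∀ y ∈ Q'.erase x₀, y ⊆ δ := by
      intro y hy
      rw [← hQ'sup]
      exact Finset.le_sup (f := id) (Finset.mem_of_mem_erase hy)
    have hnotmem : (x₀ ∪ r) ∉ Q'.erase x₀ := by
      intro h
      have hd := hQ'd _ (Finset.mem_of_mem_erase h) _ hx₀ (Finset.ne_of_mem_erase h)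
      have : Disjoint x₀ x₀ :=
        Finset.disjoint_of_subset_left Finset.subset_union_left hd
      have : x₀ = ∅ := by simpa using disjoint_self.mp this
      exact hx₀ne.ne_empty this
    have hQval : Q.val = (x₀ ∪ r) ::ₘ (Q'.erase x₀).val :=
      Finset.insert_val_of_notMem hnotmem
    obtain ⟨l₀, hl₀0⟩ := Quotient.exists_rep (Q'.erase x₀).val
    have hl₀ : (↑l₀ : Multiset _) = (Q'.erase x₀).val := hl₀0
    have hmem_l₀ : ∀ x, x ∈ l₀ ↔ x ∈ Q'.erase x₀ := by
      intro x; rw [← Multiset.mem_coe, hl₀, ← Finset.mem_def]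
    have hl : (↑((x₀ ∪ r) :: l₀) : Multiset _) = Q.val := by
      rw [hQval, ← hl₀, Multiset.cons_coe]
    have hQn : ∀ x ∈ Q, x.Nonempty := by
      intro x hx
      rcases Finset.mem_insert.mp hx with rfl | hx'
      · exact hx₀ne.mono Finset.subset_union_left
      · exact hQ'n x (Finset.mem_of_mem_erase hx')
    have hdisj_r : ∀ y, y ⊆ δ → Disjoint r y :=
      fun y hy => Finset.disjoint_of_subset_right hy Finset.sdiff_disjoint
    have hQmem : Q ∈ PartsF γ := by
      rw [mem_PartsF]
      refine ⟨Finset.insert_nonempty _ _, hQn, ?_, ?_⟩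
      · intro x hx y hy hne
        rcases Finset.mem_insert.mp hx with rfl | hx' <;>
          rcases Finset.mem_insert.mp hy with h | hy'
        · exact absurd h.symm hne
        · have h1 : Disjoint x₀ y :=
            hQ'd _ hx₀ _ (Finset.mem_of_mem_erase hy') (Finset.ne_of_mem_erase hy').symm
          have h2 : Disjoint r y := hdisj_r y (hsubδ y hy')
          exact Finset.disjoint_union_left.mpr ⟨h1, h2⟩
        · subst h
          have h1 : Disjoint x₀ x :=
            hQ'd _ hx₀ _ (Finset.mem_of_mem_erase hx') (Finset.ne_of_mem_erase hx').symm
          have h2 : Disjoint r x := hdisj_r x (hsubδ x hx')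
          exact (Finset.disjoint_union_left.mpr ⟨h1, h2⟩).symm
        · exact hQ'd _ (Finset.mem_of_mem_erase hx') _ (Finset.mem_of_mem_erase hy') hne
      · have hs : Q.sup id = (x₀ ∪ r) ⊔ (Q'.erase x₀).sup id := Finset.sup_insert
        have hs' : Q'.sup id = x₀ ⊔ (Q'.erase x₀).sup id := by
          conv_lhs => rw [← Finset.insert_erase hx₀]
          exact Finset.sup_insert
        rw [hs]
        have : (x₀ ∪ r) ⊔ (Q'.erase x₀).sup id = (x₀ ⊔ (Q'.erase x₀).sup id) ∪ r := by
          change (x₀ ∪ r) ∪ _ = (x₀ ∪ _) ∪ r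
          rw [Finset.union_assoc, Finset.union_comm r, ← Finset.union_assoc]
        rw [this, ← hs', hQ'sup, Finset.union_sdiff_of_subset hδγ]
    refine absorb_trans ?_ (mem_fsum_absorb hpvm.idem hQmem (fun Q'' => val (Q''.val.map g)))
    rw [show val (Multiset.map g Q.val)
        = val (Q.val.map (fun x => sem ot one val (wclosure one ζ) x)) from rfl]
    rw [star_term_expand ot one val hpvm hpres ζ Q hQn ((x₀ ∪ r) :: l₀) hl]
    apply mem_msum_absorb hpvm.idem
    have hQ'val : Q'.val = x₀ ::ₘ (Q'.erase x₀).val := by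
      rw [Finset.erase_val, Multiset.cons_erase (Finset.mem_def.mp hx₀)]
    have hmemsel : Q'.val ∈ sel (((x₀ ∪ r) :: l₀).map
        (fun x => (x.powerset.filter Finset.Nonempty).val)) := by
      apply mem_sel.mpr
      refine ⟨x₀ :: l₀, ?_, ?_⟩
      · rw [hQ'val, ← hl₀, ← Multiset.cons_coe]
      · rw [List.map_cons]
        refine List.Forall₂.cons ?_ ?_
        · rw [← Finset.mem_def, Finset.mem_filter, Finset.mem_powerset]
          exact ⟨Finset.subset_union_left, hx₀ne⟩
        · rw [List.forall₂_map_right_iff]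
          apply List.forall₂_same.mpr
          intro y hy
          rw [← Finset.mem_def, Finset.mem_filter, Finset.mem_powerset]
          exact ⟨subset_rfl, hQ'n y (Finset.mem_of_mem_erase ((hmem_l₀ y).mp hy))⟩
    exact Multiset.mem_map.mpr ⟨Q'.val, hmemsel, rfl⟩

  calc T = Rr + T := h2.symm
    _ = T + Rr := add_comm _ _
    _ = Rr := h1
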